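/- Let c > 0 and N ≥ c² be real numbers. Then for all real x, y₁, y₂ satisfying c√N ≤ y₁ ≤ N, −N ≤ y₂ ≤ −c√N, and c√N ≤ x ≤ N, one has TP₂(x, y₁, y₂) ≥ (c² + N − √(c²N + N²)) / 2. -/

import Mathlib

/-- `TP₂(x, y₁, y₂) = √((x² + y₁²)(x² + y₂²)) / (2x) − √(x² + y₁²)/2`. -/
noncomputable def TP2 (x y₁ y₂ : ℝ) : ℝ :=
  Real.sqrt ((x ^ 2 + y₁ ^ 2) * (x ^ 2 + y₂ ^ 2)) / (2 * x) - Real.sqrt (x ^ 2 + y₁ ^ 2) / 2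

/-- For `c > 0`, `N ≥ c²`, and all `x, y₁, y₂` with `c√N ≤ y₁ ≤ N`,
`−N ≤ y₂ ≤ −c√N`, and `c√N ≤ x ≤ N`, one has
`TP₂(x, y₁, y₂) ≥ (c² + N − √(c²N + N²)) / 2`. -/
theorem stmt11 (c N : ℝ) (hc : 0 < c) (hN : c ^ 2 ≤ N) (x y₁ y₂ : ℝ)
    (hy₁l : c * Real.sqrt N ≤ y₁) (hy₁u : y₁ ≤ N)
    (hy₂l : -N ≤ y₂) (hy₂u : y₂ ≤ -(c * Real.sqrt N))
    (hxl : c * Real.sqrt N ≤ x) (hxu : x ≤ N) :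
    (c ^ 2 + N - Real.sqrt (c ^ 2 * N + N ^ 2)) / 2 ≤ TP2 x y₁ y₂ := by
  have hN0 : 0 < N := lt_of_lt_of_le (by positivity) hN
  set s := c ^ 2 * N with hs
  have hs0 : 0 < s := by positivity
  have hsq : (c * Real.sqrt N) ^ 2 = s := by
    rw [mul_pow, Real.sq_sqrt hN0.le]
  have hcN0 : 0 < c * Real.sqrt N := by positivity
  have hx0 : 0 < x := lt_of_lt_of_le hcN0 hxl
  have hy1 : s ≤ y₁ ^ 2 := by
    rw [← hsq]; exact pow_le_pow_left₀ hcN0.le hy₁l 2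
  have hy2 : s ≤ y₂ ^ 2 := by
    rw [← hsq]
    calc (c * Real.sqrt N) ^ 2 ≤ (-y₂) ^ 2 := pow_le_pow_left₀ hcN0.le (by linarith) 2
      _ = y₂ ^ 2 := by ring
  set a := Real.sqrt (x ^ 2 + s) with ha
  set b := Real.sqrt (N ^ 2 + s) with hb
  set a₁ := Real.sqrt (x ^ 2 + y₁ ^ 2) with ha1
  set a₂ := Real.sqrt (x ^ 2 + y₂ ^ 2) with ha2
  have ha0 : 0 ≤ a := Real.sqrt_nonneg _
  have hb0 : 0 ≤ b := Real.sqrt_nonneg _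
  have ha10 : 0 ≤ a₁ := Real.sqrt_nonneg _
  have ha20 : 0 ≤ a₂ := Real.sqrt_nonneg _
  have haS : a ^ 2 = x ^ 2 + s := Real.sq_sqrt (by positivity)
  have hbS : b ^ 2 = N ^ 2 + s := Real.sq_sqrt (by positivity)
  have ha1S : a₁ ^ 2 = x ^ 2 + y₁ ^ 2 := Real.sq_sqrt (by positivity)
  have ha2S : a₂ ^ 2 = x ^ 2 + y₂ ^ 2 := Real.sq_sqrt (by positivity)
  have haa1 : a ≤ a₁ := Real.sqrt_le_sqrt (by nlinarith)
  have haa2 : a ≤ a₂ := Real.sqrt_le_sqrt (by nlinarith)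
  have hxa : x ≤ a := Real.le_sqrt_of_sq_le (by linarith)
  have hNb : N ≤ b := Real.le_sqrt_of_sq_le (by linarith)
  have hprod : Real.sqrt ((x ^ 2 + y₁ ^ 2) * (x ^ 2 + y₂ ^ 2)) = a₁ * a₂ :=
    Real.sqrt_mul (by positivity) _
  have hrhs : Real.sqrt (c ^ 2 * N + N ^ 2) = b := by
    rw [hb, hs, add_comm]
  -- key monotonicity: N * (a * (a - x)) ≥ x * (b * (b - N))
  have h1 : x ^ 2 * b ≤ N ^ 2 * a := by
    have hx2 : x ^ 2 ≤ N ^ 2 := pow_le_pow_left₀ hx0.le hxu 2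
    have hx4 : x ^ 4 ≤ N ^ 4 := pow_le_pow_left₀ hx0.le hxu 4
    have h2 : (x ^ 2 * b) ^ 2 ≤ (N ^ 2 * a) ^ 2 := by
      calc (x ^ 2 * b) ^ 2 = x ^ 4 * (N ^ 2 + s) := by rw [← hbS]; ring
        _ ≤ N ^ 4 * (x ^ 2 + s) := by
            have t1 : x ^ 4 * N ^ 2 ≤ N ^ 4 * x ^ 2 := by
              have := mul_le_mul_of_nonneg_left hx2 (by positivity : (0:ℝ) ≤ x ^ 2 * N ^ 2)
              linarith [this]
            have t2 : x ^ 4 * s ≤ N ^ 4 * s := mul_le_mul_of_nonneg_right hx4 hs0.le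
            linarith
        _ = (N ^ 2 * a) ^ 2 := by rw [← haS]; ring
    have := (pow_le_pow_iff_left₀ (by positivity : (0:ℝ) ≤ x ^ 2 * b)
      (by positivity : (0:ℝ) ≤ N ^ 2 * a) two_ne_zero).mp h2
    exact this
  have hfac : 0 < (a + x) * (b + N) := by positivity
  have hkey : x * (b * (b - N)) ≤ N * (a * (a - x)) := by
    have ha' : (a - x) * (a + x) = s := by linear_combination haS
    have hb' : (b - N) * (b + N) = s := by linear_combination hbS
    have hab : 0 ≤ a * b := by positivity
    have t1 : x * (a * b) ≤ N * (a * b) := mul_le_mul_of_nonneg_right hxu hab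
    have t3 : x * b * (a + x) ≤ N * a * (b + N) := by linarith [t1, h1]
    have hmul : x * (b * (b - N)) * ((a + x) * (b + N)) ≤
        N * (a * (a - x)) * ((a + x) * (b + N)) := by
      calc x * (b * (b - N)) * ((a + x) * (b + N))
          = x * b * (a + x) * ((b - N) * (b + N)) := by ring
        _ = x * b * (a + x) * s := by rw [hb']
        _ ≤ N * a * (b + N) * s := mul_le_mul_of_nonneg_right t3 hs0.le
        _ = N * a * (b + N) * ((a - x) * (a + x)) := by rw [ha']
        _ = N * (a * (a - x)) * ((a + x) * (b + N)) := by ring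
    exact le_of_mul_le_mul_right hmul hfac
  -- lower bound TP2 by a*(a-x)/(2x)
  have step1 : a * (a - x) / (2 * x) ≤ TP2 x y₁ y₂ := by
    unfold TP2
    rw [hprod]
    have e : a₁ * a₂ / (2 * x) - a₁ / 2 = a₁ * (a₂ - x) / (2 * x) := by
      field_simp
    rw [e, div_le_div_iff₀ (by positivity) (by positivity)]
    have t4 : a * (a - x) ≤ a₁ * (a₂ - x) :=
      mul_le_mul haa1 (by linarith : a - x ≤ a₂ - x) (by linarith) ha10
    have := mul_le_mul_of_nonneg_right t4 (by positivity : (0:ℝ) ≤ 2 * x)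
    linarith [this]
  have step2 : b * (b - N) / (2 * N) ≤ a * (a - x) / (2 * x) := by
    rw [div_le_div_iff₀ (by positivity) (by positivity)]
    linarith [hkey]
  have step3 : (c ^ 2 + N - b) / 2 = b * (b - N) / (2 * N) := by
    field_simp
    linarith [hbS, hs]
  rw [hrhs, step3]
  linarith
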